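/- In the random model, let δ := 1/(2n²mφ) and let B_1(r,δ) := {r̃ ∈ ℝ^m : ‖r − r̃‖_1 ≤ δ} denote the closed ℓ_1-ball. Then with probability at least 1 − 1/n there exists a directed cycle C of G such that B_1(r,δ) ⊆ P^C. -/

import Mathlib

open MeasureTheory

/-- The `k`-th edge of the closed walk determined by the list of vertices `c`
(from the `k`-th vertex to the next one, cyclically). -/
def cycleEdge {n : ℕ} (c : List (Fin n)) (k : Fin c.length) : Fin n × Fin n :=
  (c.get k, c.get ⟨(k.1 + 1) % c.length, Nat.mod_lt _ (Nat.lt_of_le_of_lt (Nat.zero_le _) k.isLt)⟩)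

/-- `C ⊆ E` is the edge set of a simple directed cycle of the graph `([n], E)`. -/
def IsCycle {n : ℕ} (E : Finset (Fin n × Fin n)) (C : Finset {e : Fin n × Fin n // e ∈ E}) :
    Prop :=
  ∃ (c : List (Fin n)) (h : ∀ k : Fin c.length, cycleEdge c k ∈ E),
    0 < c.length ∧ c.Nodup ∧
      C = Finset.image (fun k => (⟨cycleEdge c k, h k⟩ : {e : Fin n × Fin n // e ∈ E}))
            Finset.univ

/-- Mean weight of a set of edges. -/
noncomputable def meanWeight {n : ℕ} {E : Finset (Fin n × Fin n)}
    (r : {e : Fin n × Fin n // e ∈ E} → ℝ) (C : Finset {e : Fin n × Fin n // e ∈ E}) : ℝ :=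
  (∑ e ∈ C, r e) / C.card

/-- `C` is an optimal (minimum mean weight) cycle of the DMDP with weights `r`. -/
def IsOptCycle {n : ℕ} (E : Finset (Fin n × Fin n)) (r : {e : Fin n × Fin n // e ∈ E} → ℝ)
    (C : Finset {e : Fin n × Fin n // e ∈ E}) : Prop :=
  IsCycle E C ∧ ∀ C', IsCycle E C' → meanWeight r C ≤ meanWeight r C'

/-- `P^C`: the set of weight vectors for which `C` is the unique optimal cycle. -/
def Pcell {n : ℕ} (E : Finset (Fin n × Fin n)) (C : Finset {e : Fin n × Fin n // e ∈ E}) :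
    Set ({e : Fin n × Fin n // e ∈ E} → ℝ) :=
  {r | IsOptCycle E r C ∧ ∀ C', IsOptCycle E r C' → C' = C}

/-- `U := ∪_C P^C`. -/
def Ucell {n : ℕ} (E : Finset (Fin n × Fin n)) : Set ({e : Fin n × Fin n // e ∈ E} → ℝ) :=
  ⋃ C, Pcell E C

/-- The directed graph `([n], E)` is strongly connected. -/
def StronglyConnected {n : ℕ} (E : Finset (Fin n × Fin n)) : Prop :=
  ∀ i j : Fin n, Relation.ReflTransGen (fun a b => (a, b) ∈ E) i j

section Aux

variable {n : ℕ} {E : Finset (Fin n × Fin n)} {C C' : Finset {e : Fin n × Fin n // e ∈ E}}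

lemma cycle_mem_iff {c : List (Fin n)} (h : ∀ k : Fin c.length, cycleEdge c k ∈ E)
    (hC : C = Finset.image (fun k => (⟨cycleEdge c k, h k⟩ : {e : Fin n × Fin n // e ∈ E}))
      Finset.univ) {p : {e : Fin n × Fin n // e ∈ E}} :
    p ∈ C ↔ ∃ k, (⟨cycleEdge c k, h k⟩ : {e : Fin n × Fin n // e ∈ E}) = p := by
  subst hC; simp [Finset.mem_image]

lemma cycle_edge_inj {c : List (Fin n)} (hnd : c.Nodup)
    (h : ∀ k : Fin c.length, cycleEdge c k ∈ E) :
    Function.Injective (fun k => (⟨cycleEdge c k, h k⟩ : {e : Fin n × Fin n // e ∈ E})) := by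
  intro k k' hkk
  have : c.get k = c.get k' := congrArg (fun p => p.1.1) hkk
  exact List.nodup_iff_injective_get.mp hnd this

lemma IsCycle.card_eq (hC : IsCycle E C) :
    ∃ (c : List (Fin n)) (h : ∀ k : Fin c.length, cycleEdge c k ∈ E),
      0 < c.length ∧ c.Nodup ∧
      C = Finset.image (fun k => (⟨cycleEdge c k, h k⟩ : {e : Fin n × Fin n // e ∈ E}))
            Finset.univ ∧ C.card = c.length := by
  obtain ⟨c, h, hlen, hnd, hCeq⟩ := hC
  refine ⟨c, h, hlen, hnd, hCeq, ?_⟩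
  rw [hCeq, Finset.card_image_of_injective _ (cycle_edge_inj hnd h), Finset.card_univ,
    Fintype.card_fin]

lemma IsCycle.card_pos (hC : IsCycle E C) : 0 < C.card := by
  obtain ⟨c, h, hlen, hnd, hCeq, hcard⟩ := hC.card_eq
  omega

lemma IsCycle.card_le (hC : IsCycle E C) : C.card ≤ n := by
  obtain ⟨c, h, hlen, hnd, hCeq, hcard⟩ := hC.card_eq
  have := hnd.length_le_card
  simpa [hcard] using this

lemma IsCycle.succ (hC : IsCycle E C) {p : {e : Fin n × Fin n // e ∈ E}} (hp : p ∈ C) :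
    ∃ q ∈ C, q.1.1 = p.1.2 := by
  obtain ⟨c, h, hlen, hnd, hCeq⟩ := hC
  obtain ⟨k, hk⟩ := (cycle_mem_iff h hCeq).mp hp
  refine ⟨⟨cycleEdge c ⟨(k.1 + 1) % c.length, Nat.mod_lt _ hlen⟩,
    h _⟩, (cycle_mem_iff h hCeq).mpr ⟨_, rfl⟩, ?_⟩
  rw [← hk]
  rfl

lemma IsCycle.fst_inj (hC : IsCycle E C) {p q : {e : Fin n × Fin n // e ∈ E}}
    (hp : p ∈ C) (hq : q ∈ C) (hfst : p.1.1 = q.1.1) : p = q := by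
  obtain ⟨c, h, hlen, hnd, hCeq⟩ := hC
  obtain ⟨k, hk⟩ := (cycle_mem_iff h hCeq).mp hp
  obtain ⟨k', hk'⟩ := (cycle_mem_iff h hCeq).mp hq
  have : c.get k = c.get k' := by rw [← hk, ← hk'] at hfst; exact hfst
  have : k = k' := List.nodup_iff_injective_get.mp hnd this
  rw [← hk, ← hk', this]

lemma IsCycle.eq_of_subset (hC : IsCycle E C) (hC' : IsCycle E C') (hsub : C ⊆ C') : C = C' := by
  have hC'full := hC'
  obtain ⟨c, h, hlen, hnd, hCeq'⟩ := hC'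
  -- every vertex of the big cycle `C'` is the source of an edge of `C`
  have main : ∀ k : Fin c.length, ∃ p ∈ C, p.1.1 = c.get k := by
    have hne : C.Nonempty := Finset.card_pos.mp hC.card_pos
    obtain ⟨p₀, hp₀⟩ := hne
    obtain ⟨i₀, hi₀⟩ := (cycle_mem_iff h hCeq').mp (hsub hp₀)
    have step : ∀ m : ℕ, (∃ p ∈ C, p.1.1 = c.get ⟨m % c.length, Nat.mod_lt _ hlen⟩) →
        ∃ p ∈ C, p.1.1 = c.get ⟨(m + 1) % c.length, Nat.mod_lt _ hlen⟩ := by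
      rintro m ⟨p, hpC, hpfst⟩
      obtain ⟨q, hqC, hqfst⟩ := hC.succ hpC
      obtain ⟨i, hi⟩ := (cycle_mem_iff h hCeq').mp (hsub hpC)
      have hival : c.get i = c.get ⟨m % c.length, Nat.mod_lt _ hlen⟩ := by
        have h2 : p.1.1 = c.get i := by rw [← hi]; rfl
        rw [← h2, hpfst]
      have hieq : i = ⟨m % c.length, Nat.mod_lt _ hlen⟩ :=
        List.nodup_iff_injective_get.mp hnd hival
      refine ⟨q, hqC, ?_⟩
      have hsnd : p.1.2 = c.get ⟨(m + 1) % c.length, Nat.mod_lt _ hlen⟩ := by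
        rw [← hi]
        show c.get ⟨(i.1 + 1) % c.length, _⟩ = _
        congr 1
        apply Fin.ext
        show (i.1 + 1) % c.length = (m + 1) % c.length
        rw [hieq]
        show (m % c.length + 1) % c.length = (m + 1) % c.length
        conv_rhs => rw [← Nat.mod_add_mod]
      rw [hqfst, hsnd]
    have prop : ∀ j : ℕ, ∃ p ∈ C, p.1.1 = c.get ⟨(i₀.1 + j) % c.length, Nat.mod_lt _ hlen⟩ := by
      intro j
      induction j with
      | zero =>
        refine ⟨p₀, hp₀, ?_⟩
        have h2 : p₀.1.1 = c.get i₀ := by rw [← hi₀]; rfl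
        rw [h2]
        congr 1
        apply Fin.ext
        simp [Nat.mod_eq_of_lt i₀.isLt]
      | succ j ih => simpa [← Nat.add_assoc] using step (i₀.1 + j) ih
    intro k
    obtain ⟨p, hpC, hp⟩ := prop ((c.length - i₀.1) + k.1)
    refine ⟨p, hpC, ?_⟩
    rw [hp]
    congr 1
    apply Fin.ext
    show (i₀.1 + (c.length - i₀.1 + k.1)) % c.length = k.1
    have h1 : i₀.1 + (c.length - i₀.1 + k.1) = c.length + k.1 := by
      have := i₀.isLt; omega
    rw [h1, Nat.add_mod_left, Nat.mod_eq_of_lt k.isLt]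
  refine Finset.Subset.antisymm hsub fun q hq => ?_
  obtain ⟨k, hk⟩ := (cycle_mem_iff h hCeq').mp hq
  obtain ⟨p, hpC, hp⟩ := main k
  have hqfst : q.1.1 = c.get k := by rw [← hk]; rfl
  have : p = q := hC'full.fst_inj (hsub hpC) hq (by rw [hp, hqfst])
  rwa [← this]


lemma meanWeight_update_not_mem {e : {e : Fin n × Fin n // e ∈ E}} (he : e ∉ C)
    (r : {e : Fin n × Fin n // e ∈ E} → ℝ) (t : ℝ) :
    meanWeight (Function.update r e t) C = meanWeight r C := by
  unfold meanWeight
  congr 1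
  exact Finset.sum_congr rfl fun a ha => Function.update_of_ne (fun h => he (by rw [← h]; exact ha)) _ _

lemma meanWeight_update_mem {e : {e : Fin n × Fin n // e ∈ E}} (he : e ∈ C)
    (r : {e : Fin n × Fin n // e ∈ E} → ℝ) (t : ℝ) :
    meanWeight (Function.update r e t) C = meanWeight r C + (t - r e) / C.card := by
  unfold meanWeight
  rw [Finset.sum_update_of_mem he, Finset.sdiff_singleton_eq_erase, Finset.sum_erase_eq_sub he]
  ring

lemma abs_meanWeight_sub_le (hC : IsCycle E C)
    (r r' : {e : Fin n × Fin n // e ∈ E} → ℝ) :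
    |meanWeight r C - meanWeight r' C| ≤ ∑ e, |r e - r' e| := by
  unfold meanWeight
  rw [div_sub_div_same, ← Finset.sum_sub_distrib, abs_div]
  have hcard : (1:ℝ) ≤ |(C.card : ℝ)| := by
    rw [abs_of_nonneg (by positivity)]
    exact_mod_cast hC.card_pos
  have h1 : |∑ e ∈ C, (r e - r' e)| ≤ ∑ e, |r e - r' e| :=
    le_trans (Finset.abs_sum_le_sum_abs _ _)
      (Finset.sum_le_sum_of_subset_of_nonneg (Finset.subset_univ C)
        (fun _ _ _ => abs_nonneg _))
  exact (div_le_self (abs_nonneg _) hcard).trans h1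

lemma ball_subset_Pcell {δ : ℝ} (hδ : 0 ≤ δ) (hC : IsCycle E C)
    {r : {e : Fin n × Fin n // e ∈ E} → ℝ}
    (hgap : ∀ C', IsCycle E C' → C' ≠ C → meanWeight r C + 2 * δ < meanWeight r C') :
    ∀ r', (∑ e, |r e - r' e|) ≤ δ → r' ∈ Pcell E C := by
  intro r' hr'
  have key : ∀ C', IsCycle E C' → C' ≠ C → meanWeight r' C < meanWeight r' C' := by
    intro C' hC' hne
    have h1 := (abs_meanWeight_sub_le hC r r').trans hr'
    have h2 := (abs_meanWeight_sub_le hC' r r').trans hr'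
    have h3 := hgap C' hC' hne
    rw [abs_le] at h1 h2
    linarith [h1.1, h1.2, h2.1, h2.2]
  refine ⟨⟨hC, fun C'' hC'' => ?_⟩, fun C'' hC'' => ?_⟩
  · by_cases hne : C'' = C
    · rw [hne]
    · exact le_of_lt (key C'' hC'' hne)
  · by_contra hne
    have h1 := key C'' hC''.1 hne
    have h2 := hC''.2 C hC
    linarith

/-- The bad event for edge `e`. -/
def BadAt (E : Finset (Fin n × Fin n)) (δ : ℝ) (e : {e : Fin n × Fin n // e ∈ E})
    (r : {e : Fin n × Fin n // e ∈ E} → ℝ) : Prop :=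
  ∃ C C' : Finset {e : Fin n × Fin n // e ∈ E}, IsCycle E C ∧ IsCycle E C' ∧
    e ∉ C ∧ e ∈ C' ∧ (∀ D, IsCycle E D → meanWeight r C ≤ meanWeight r D) ∧
    meanWeight r C' ≤ meanWeight r C + 2 * δ

lemma good_of_not_bad {δ : ℝ} (hδ : 0 ≤ δ) (hex : ∃ C, IsCycle E C)
    {r : {e : Fin n × Fin n // e ∈ E} → ℝ}
    (hb : ∀ e, ¬ BadAt E δ e r) :
    ∃ C : Finset {e : Fin n × Fin n // e ∈ E}, IsCycle E C ∧
      ∀ r', (∑ e, |r e - r' e|) ≤ δ → r' ∈ Pcell E C := by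
  classical
  obtain ⟨C₀, hC₀⟩ := hex
  obtain ⟨C, hCmem, hCmin⟩ := Finset.exists_min_image
    (Finset.univ.filter fun D => IsCycle E D) (fun D => meanWeight r D)
    ⟨C₀, by simpa using hC₀⟩
  have hC : IsCycle E C := by simpa using hCmem
  have hmin : ∀ D, IsCycle E D → meanWeight r C ≤ meanWeight r D := fun D hD =>
    hCmin D (by simpa using hD)
  refine ⟨C, hC, ball_subset_Pcell hδ hC ?_⟩
  intro C' hC' hne
  by_contra hle
  push_neg at hle
  -- C' is not a subset of C
  obtain ⟨e, heC', heC⟩ : ∃ e, e ∈ C' ∧ e ∉ C := by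
    by_contra hno
    push_neg at hno
    exact hne (hC'.eq_of_subset hC fun x hx => hno x hx)
  exact hb e ⟨C, C', hC, hC', heC, heC', hmin, hle⟩

lemma badAt_slice {δ : ℝ} (hδ : 0 ≤ δ) {e : {e : Fin n × Fin n // e ∈ E}}
    {r : {e : Fin n × Fin n // e ∈ E} → ℝ} {t₁ t₂ : ℝ}
    (h1 : BadAt E δ e (Function.update r e t₁))
    (h2 : BadAt E δ e (Function.update r e t₂)) :
    |t₁ - t₂| ≤ 2 * δ * n := by
  -- by symmetry it suffices to treat t₁ ≤ t₂
  have key : ∀ s₁ s₂ : ℝ, s₁ ≤ s₂ → BadAt E δ e (Function.update r e s₁) →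
      BadAt E δ e (Function.update r e s₂) → s₂ - s₁ ≤ 2 * δ * n := by
    rintro s₁ s₂ hs ⟨C₁, C₁', hc1, hc1', he1, he1', hmin1, hle1⟩
      ⟨C₂, C₂', hc2, hc2', he2, he2', hmin2, hle2⟩
    set r₁ := Function.update r e s₁
    set r₂ := Function.update r e s₂
    have e1 : meanWeight r₂ C₁ = meanWeight r₁ C₁ := by
      rw [meanWeight_update_not_mem he1, meanWeight_update_not_mem he1]
    have e2 : meanWeight r₂ C₂ = meanWeight r₁ C₂ := by
      rw [meanWeight_update_not_mem he2, meanWeight_update_not_mem he2]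
    have e3 : meanWeight r₁ C₂' = meanWeight r₂ C₂' + (s₁ - s₂) / C₂'.card := by
      rw [meanWeight_update_mem he2', meanWeight_update_mem he2']
      ring
    have cpos : (0:ℝ) < C₂'.card := by exact_mod_cast hc2'.card_pos
    have cle : (C₂'.card : ℝ) ≤ n := by exact_mod_cast hc2'.card_le
    have k1 : meanWeight r₁ C₁ ≤ meanWeight r₁ C₂' := hmin1 C₂' hc2'
    have k2 : meanWeight r₂ C₂ ≤ meanWeight r₂ C₁ := hmin2 C₁ hc1
    -- chain
    have key2 : (s₂ - s₁) / C₂'.card ≤ 2 * δ := by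
      have hA : meanWeight r₁ C₁ ≤ meanWeight r₂ C₂' + (s₁ - s₂) / C₂'.card := by
        rw [← e3]; exact k1
      have hB : meanWeight r₂ C₂' ≤ meanWeight r₂ C₂ + 2 * δ := hle2
      have hCc : meanWeight r₂ C₂ ≤ meanWeight r₁ C₁ := by rw [← e1]; exact k2
      have hdiv : (s₁ - s₂) / (C₂'.card : ℝ) = -((s₂ - s₁) / C₂'.card) := by ring
      rw [hdiv] at hA
      linarith
    have := (div_le_iff₀ cpos).mp key2
    calc s₂ - s₁ ≤ 2 * δ * C₂'.card := this
      _ ≤ 2 * δ * n := by nlinarith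
  rcases le_total t₁ t₂ with hle | hle
  · rw [abs_of_nonpos (by linarith)]
    have := key t₁ t₂ hle h1 h2
    linarith
  · rw [abs_of_nonneg (by linarith)]
    exact key t₂ t₁ hle h2 h1

lemma exists_isCycle (hn : 0 < n) (hout : ∀ i : Fin n, ∃ j : Fin n, (i, j) ∈ E) :
    ∃ C : Finset {e : Fin n × Fin n // e ∈ E}, IsCycle E C := by
  classical
  choose g hg using hout
  obtain ⟨a, b, hab, heq⟩ : ∃ a b : ℕ, a ≠ b ∧ g^[a] ⟨0, hn⟩ = g^[b] ⟨0, hn⟩ := by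
    obtain ⟨a, b, hab, h⟩ := Finite.exists_ne_map_eq_of_infinite (fun k : ℕ => g^[k] ⟨0, hn⟩)
    exact ⟨a, b, hab, h⟩
  wlog hlt : a < b generalizing a b
  · exact this b a hab.symm heq.symm (by omega)
  set y := g^[a] (⟨0, hn⟩ : Fin n) with hy
  have hper : Function.IsPeriodicPt g (b - a) y := by
    show g^[b-a] y = y
    rw [hy, ← Function.iterate_add_apply, Nat.sub_add_cancel (le_of_lt hlt)]
    exact heq.symm
  have hppos : 0 < Function.minimalPeriod g y :=
    Function.IsPeriodicPt.minimalPeriod_pos (by omega) hper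
  set p := Function.minimalPeriod g y with hp
  set c : List (Fin n) := (List.range p).map (fun k => g^[k] y) with hc
  have hclen : c.length = p := by simp [hc]
  have hget : ∀ k : Fin c.length, c.get k = g^[k.1] y := by
    intro k
    simp [hc]
  have hedge : ∀ k : Fin c.length, cycleEdge c k ∈ E := by
    intro k
    have h2 : c.get ⟨(k.1 + 1) % c.length, Nat.mod_lt _ (by omega)⟩ = g (g^[k.1] y) := by
      rw [hget]
      show g^[(k.1+1) % c.length] y = _
      rcases Nat.lt_or_ge (k.1 + 1) c.length with h | h
      · rw [Nat.mod_eq_of_lt h, Function.iterate_succ_apply']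
      · have hk1 : k.1 + 1 = c.length := by have := k.isLt; omega
        rw [hk1, Nat.mod_self]
        show y = _
        rw [← Function.iterate_succ_apply' g k.1 y]
        have h3 : g^[c.length] y = y := by
          rw [hclen]; exact Function.isPeriodicPt_minimalPeriod g y
        rw [← hk1] at h3
        exact h3.symm
    show (c.get k, _) ∈ E
    rw [hget, h2]
    exact hg _
  have hnd : c.Nodup := by
    rw [hc]
    refine List.Nodup.map_on ?_ List.nodup_range
    intro x hx x' hx' hxx
    exact Function.iterate_injOn_Iio_minimalPeriod
      (by simpa using List.mem_range.mp hx) (by simpa using List.mem_range.mp hx') hxx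
  exact ⟨_, c, hedge, by omega, hnd, rfl⟩

lemma measurable_meanWeight (C : Finset {e : Fin n × Fin n // e ∈ E}) :
    Measurable fun r : {e : Fin n × Fin n // e ∈ E} → ℝ => meanWeight r C := by
  unfold meanWeight
  exact (Finset.measurable_sum C fun a _ => measurable_pi_apply a).div_const _

lemma measurableSet_badAt (δ : ℝ) (e : {e : Fin n × Fin n // e ∈ E}) :
    MeasurableSet {r : {e : Fin n × Fin n // e ∈ E} → ℝ | BadAt E δ e r} := by
  have h1 : {r : {e : Fin n × Fin n // e ∈ E} → ℝ | BadAt E δ e r} =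
      ⋃ C, ⋃ C', {r | IsCycle E C ∧ IsCycle E C' ∧ e ∉ C ∧ e ∈ C' ∧
        (∀ D, IsCycle E D → meanWeight r C ≤ meanWeight r D) ∧
        meanWeight r C' ≤ meanWeight r C + 2 * δ} := by
    ext r
    simp only [Set.mem_setOf_eq, Set.mem_iUnion, BadAt]
  rw [h1]
  refine MeasurableSet.iUnion fun C => MeasurableSet.iUnion fun C' => ?_
  have h2 : {r : {e : Fin n × Fin n // e ∈ E} → ℝ | IsCycle E C ∧ IsCycle E C' ∧ e ∉ C ∧ e ∈ C' ∧
        (∀ D, IsCycle E D → meanWeight r C ≤ meanWeight r D) ∧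
        meanWeight r C' ≤ meanWeight r C + 2 * δ} =
      ({_r | IsCycle E C} ∩ ({_r | IsCycle E C'} ∩ ({_r | e ∉ C} ∩ ({_r | e ∈ C'} ∩
        ((⋂ D, {r | IsCycle E D → meanWeight r C ≤ meanWeight r D}) ∩
        {r | meanWeight r C' ≤ meanWeight r C + 2 * δ}))))) := by
    ext r
    simp only [Set.mem_setOf_eq, Set.mem_inter_iff, Set.mem_iInter]
  rw [h2]
  refine (MeasurableSet.const _).inter ((MeasurableSet.const _).inter
    ((MeasurableSet.const _).inter ((MeasurableSet.const _).inter
    ((MeasurableSet.iInter fun D => ?_).inter ?_))))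
  · by_cases hD : IsCycle E D
    · have : {r : {e : Fin n × Fin n // e ∈ E} → ℝ | IsCycle E D →
          meanWeight r C ≤ meanWeight r D} = {r | meanWeight r C ≤ meanWeight r D} := by
        ext r; simp [hD]
      rw [this]
      exact measurableSet_le (measurable_meanWeight C) (measurable_meanWeight D)
    · have : {r : {e : Fin n × Fin n // e ∈ E} → ℝ | IsCycle E D →
          meanWeight r C ≤ meanWeight r D} = Set.univ := by
        ext r; simp [hD]
      rw [this]
      exact MeasurableSet.univ
  · exact measurableSet_le (measurable_meanWeight C')
      ((measurable_meanWeight C).add_const _)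

lemma volume_le_of_dist_le {S : Set ℝ} {L : ℝ} (hL : 0 ≤ L)
    (h : ∀ a ∈ S, ∀ b ∈ S, |a - b| ≤ L) : volume S ≤ ENNReal.ofReal L := by
  rcases S.eq_empty_or_nonempty with hS | ⟨a, ha⟩
  · simp [hS]
  have hbdd : BddBelow S := ⟨a - L, fun x hx => by
    have := h a ha x hx; rw [abs_le] at this; linarith⟩
  have hsub : S ⊆ Set.Icc (sInf S) (sInf S + L) := by
    intro x hx
    refine ⟨csInf_le hbdd hx, ?_⟩
    have : x - L ≤ sInf S := le_csInf ⟨a, ha⟩ fun b hb => by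
      have := h x hx b hb; rw [abs_le] at this; linarith
    linarith
  calc volume S ≤ volume (Set.Icc (sInf S) (sInf S + L)) := measure_mono hsub
    _ = ENNReal.ofReal L := by rw [Real.volume_Icc]; ring_nf

end Aux

open ProbabilityTheory in
/-- In the random model, with `δ := 1/(2n²mφ)`, with probability at least
`1 - 1/n` the closed `ℓ₁`-ball of radius `δ` around the random weights is contained in a
single cell `P^C`. -/
theorem stmt3 (n : ℕ) (hn : 0 < n) (E : Finset (Fin n × Fin n))
    (hsc : StronglyConnected E) (hout : ∀ i : Fin n, ∃ j : Fin n, (i, j) ∈ E)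
    (φ : ℝ) (hφ : 0 < φ)
    (Ω : Type*) [MeasurableSpace Ω] (μ : Measure Ω) [IsProbabilityMeasure μ]
    (X : Ω → {e : Fin n × Fin n // e ∈ E} → ℝ)
    (hmeas : ∀ e, Measurable fun ω => X ω e)
    (hindep : iIndepFun (fun e ω => X ω e) μ)
    (f : {e : Fin n × Fin n // e ∈ E} → ℝ → ENNReal)
    (hdens : ∀ e, Measure.map (fun ω => X ω e) μ = volume.withDensity (f e))
    (hbound : ∀ e y, f e y ≤ ENNReal.ofReal φ)
    (δ : ℝ) (hδ : δ = 1 / (2 * n ^ 2 * E.card * φ)) :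
    μ {ω | ∃ C : Finset {e : Fin n × Fin n // e ∈ E}, IsCycle E C ∧
        ∀ r' : {e : Fin n × Fin n // e ∈ E} → ℝ,
          (∑ e, |X ω e - r' e|) ≤ δ → r' ∈ Pcell E C} ≥
      1 - (n : ENNReal)⁻¹ := by
  classical
  have hmpos : 0 < E.card := by
    obtain ⟨j, hj⟩ := hout ⟨0, hn⟩
    exact Finset.card_pos.mpr ⟨_, hj⟩
  have hnR : (0:ℝ) < n := by exact_mod_cast hn
  have hmR : (0:ℝ) < E.card := by exact_mod_cast hmpos
  have hδpos : 0 < δ := by rw [hδ]; positivity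
  have hex : ∃ C, IsCycle E C := exists_isCycle hn hout
  set B : {e : Fin n × Fin n // e ∈ E} → Set Ω :=
    fun e => (fun ω => X ω) ⁻¹' {r | BadAt E δ e r} with hB
  have hXmeas : Measurable fun ω => X ω := measurable_pi_lambda _ hmeas
  have hBmeas : ∀ e, MeasurableSet (B e) := fun e => hXmeas (measurableSet_badAt δ e)
  have hincl : (⋃ e, B e)ᶜ ⊆ {ω | ∃ C : Finset {e : Fin n × Fin n // e ∈ E}, IsCycle E C ∧
      ∀ r' : {e : Fin n × Fin n // e ∈ E} → ℝ,
        (∑ e, |X ω e - r' e|) ≤ δ → r' ∈ Pcell E C} := by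
    intro ω hω
    simp only [Set.mem_compl_iff, Set.mem_iUnion, not_exists] at hω
    exact good_of_not_bad (le_of_lt hδpos) hex fun e he => hω e he
  -- the per-edge bound
  have hbd : ∀ e, μ (B e) ≤ ENNReal.ofReal φ * ENNReal.ofReal (2 * δ * n) := by
    intro e
    set T : Finset {e : Fin n × Fin n // e ∈ E} := {e}ᶜ with hT
    set Z : Ω → (↥T → ℝ) := fun ω i => X ω i with hZ
    set Y : Ω → ℝ := fun ω => X ω e with hY
    have hZmeas : Measurable Z := measurable_pi_lambda _ fun i => hmeas i
    have hYmeas : Measurable Y := hmeas e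
    have hInd0 := hindep.indepFun_finset {e} T disjoint_compl_right hmeas
    have hInd : IndepFun Y Z μ := by
      have := hInd0.comp (φ := fun v : (↥({e} : Finset _) → ℝ) => v ⟨e, Finset.mem_singleton_self e⟩)
        (ψ := id) (_mγ := inferInstance) (_mγ' := inferInstance) (measurable_pi_apply _) measurable_id
      exact this
    have hmap : μ.map (fun ω => (Z ω, Y ω)) = (μ.map Z).prod (μ.map Y) :=
      (indepFun_iff_map_prod_eq_prod_map_map hZmeas.aemeasurable hYmeas.aemeasurable).mp hInd.symm
    set glue : (↥T → ℝ) × ℝ → ({e : Fin n × Fin n // e ∈ E} → ℝ) :=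
      fun p a => if h : a ∈ T then p.1 ⟨a, h⟩ else p.2 with hglue
    have hglue_meas : Measurable glue := by
      refine measurable_pi_lambda _ fun a => ?_
      by_cases h : a ∈ T
      · simp only [hglue, h, dif_pos]
        exact (measurable_pi_apply _).comp measurable_fst
      · simp only [hglue, h, dif_neg, not_false_iff]
        exact measurable_snd
    have hnotT : ∀ a : {e : Fin n × Fin n // e ∈ E}, a ∉ T → a = e := by
      intro a ha
      by_contra hne
      exact ha (Finset.mem_compl.mpr (fun hmem => hne (Finset.mem_singleton.mp hmem)))
    have hglueX : ∀ ω, glue (Z ω, Y ω) = X ω := by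
      intro ω; funext a
      by_cases h : a ∈ T
      · simp only [hglue, h, dif_pos]; rfl
      · simp only [hglue, h, dif_neg, not_false_iff]
        rw [hnotT a h]
    have hupdate : ∀ (z : ↥T → ℝ) (t : ℝ),
        glue (z, t) = Function.update (glue (z, 0)) e t := by
      intro z t; funext a
      by_cases h : a = e
      · subst h
        have haT : a ∉ T := by simp [hT]
        simp only [hglue, haT, dif_neg, not_false_iff, Function.update_self]
      · have haT : a ∈ T := Finset.mem_compl.mpr (fun hmem => h (Finset.mem_singleton.mp hmem))
        simp only [hglue, haT, dif_pos, Function.update_of_ne h]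
    haveI : IsProbabilityMeasure (μ.map Y) := Measure.isProbabilityMeasure_map hYmeas.aemeasurable
    haveI : IsProbabilityMeasure (μ.map Z) := Measure.isProbabilityMeasure_map hZmeas.aemeasurable
    have hbadmeas := measurableSet_badAt (E := E) δ e
    have hpre : MeasurableSet (glue ⁻¹' {r | BadAt E δ e r}) := hglue_meas hbadmeas
    have step1 : μ (B e) = ((μ.map Z).prod (μ.map Y)) (glue ⁻¹' {r | BadAt E δ e r}) := by
      rw [← hmap, Measure.map_apply (hZmeas.prodMk hYmeas) hpre]
      congr 1
      ext ω
      simp only [hB, Set.mem_preimage, Set.mem_setOf_eq, hglueX ω]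
    have step2 : ((μ.map Z).prod (μ.map Y)) (glue ⁻¹' {r | BadAt E δ e r}) =
        ∫⁻ z, (μ.map Y) (Prod.mk z ⁻¹' (glue ⁻¹' {r | BadAt E δ e r})) ∂(μ.map Z) :=
      Measure.prod_apply hpre
    have step3 : ∀ z : ↥T → ℝ, (μ.map Y) (Prod.mk z ⁻¹' (glue ⁻¹' {r | BadAt E δ e r})) ≤
        ENNReal.ofReal φ * ENNReal.ofReal (2 * δ * n) := by
      intro z
      have hSmeas : MeasurableSet (Prod.mk z ⁻¹' (glue ⁻¹' {r | BadAt E δ e r})) :=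
        measurable_prodMk_left hpre
      have hYmap : μ.map Y = volume.withDensity (f e) := hdens e
      rw [hYmap, withDensity_apply _ hSmeas]
      have hsmall : volume (Prod.mk z ⁻¹' (glue ⁻¹' {r | BadAt E δ e r})) ≤
          ENNReal.ofReal (2 * δ * n) := by
        refine volume_le_of_dist_le (by positivity) ?_
        intro a ha b hb
        simp only [Set.mem_preimage, Set.mem_setOf_eq] at ha hb
        rw [hupdate z a] at ha
        rw [hupdate z b] at hb
        exact badAt_slice (le_of_lt hδpos) ha hb
      calc ∫⁻ t in Prod.mk z ⁻¹' (glue ⁻¹' {r | BadAt E δ e r}), f e t ∂volume ≤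
          ∫⁻ _ in Prod.mk z ⁻¹' (glue ⁻¹' {r | BadAt E δ e r}), ENNReal.ofReal φ ∂volume :=
            lintegral_mono fun t => hbound e t
        _ = ENNReal.ofReal φ * volume (Prod.mk z ⁻¹' (glue ⁻¹' {r | BadAt E δ e r})) :=
            setLIntegral_const _ _
        _ ≤ ENNReal.ofReal φ * ENNReal.ofReal (2 * δ * n) := by
            exact mul_le_mul_right hsmall _
    calc μ (B e) = _ := step1
      _ = _ := step2
      _ ≤ ∫⁻ _, ENNReal.ofReal φ * ENNReal.ofReal (2 * δ * n) ∂(μ.map Z) :=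
          lintegral_mono step3
      _ = ENNReal.ofReal φ * ENNReal.ofReal (2 * δ * n) := by
          rw [lintegral_const, measure_univ, mul_one]
  -- summing up
  have htot : μ (⋃ e, B e) ≤ (n : ENNReal)⁻¹ := by
    have h1 : μ (⋃ e, B e) ≤ ∑ e : {e : Fin n × Fin n // e ∈ E},
        (ENNReal.ofReal φ * ENNReal.ofReal (2 * δ * n)) := by
      refine (measure_iUnion_le B).trans ?_
      rw [tsum_fintype]
      exact Finset.sum_le_sum fun e _ => hbd e
    refine h1.trans ?_
    rw [Finset.sum_const, Finset.card_univ, Fintype.card_coe]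
    have h2 : ENNReal.ofReal φ * ENNReal.ofReal (2 * δ * n) =
        ENNReal.ofReal (φ * (2 * δ * n)) := (ENNReal.ofReal_mul (le_of_lt hφ)).symm
    rw [h2, nsmul_eq_mul, ← ENNReal.ofReal_natCast E.card,
      ← ENNReal.ofReal_mul (by positivity)]
    have h3 : (E.card : ℝ) * (φ * (2 * δ * n)) = (n : ℝ)⁻¹ := by
      rw [hδ]
      field_simp
    rw [h3, ← ENNReal.ofReal_natCast n, ← ENNReal.ofReal_inv_of_pos hnR]
  have hcompl : μ ((⋃ e, B e)ᶜ) = 1 - μ (⋃ e, B e) :=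
    prob_compl_eq_one_sub (MeasurableSet.iUnion hBmeas)
  calc 1 - (n : ENNReal)⁻¹ ≤ 1 - μ (⋃ e, B e) := tsub_le_tsub_left htot 1
    _ = μ ((⋃ e, B e)ᶜ) := hcompl.symm
    _ ≤ _ := measure_mono hincl
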